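/- The imaginary unit function ℐ cannot be extended continuously to any real point: for every x₀ ∈ ℝ ⊂ ℍ, there is no continuous function on a neighborhood of x₀ in ℍ extending ℐ restricted to the nonreal quaternions of that neighborhood. -/

import Mathlib

open Quaternion Set

/-- The quaternionic exponential, given by the power series `∑ qᵏ/k!`. -/
noncomputable def qexp (q : ℍ[ℝ]) : ℍ[ℝ] := NormedSpace.exp q

/-- The slice argument `arg_ℐ(q) ∈ (0,π)` of a nonreal quaternion. -/
noncomputable def sliceArg (q : ℍ[ℝ]) : ℝ := Real.arccos (q.re / ‖q‖)

/-- The imaginary unit `ℐ(q)` of a nonreal quaternion. -/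
noncomputable def unitIm (q : ℍ[ℝ]) : ℍ[ℝ] := ‖q.im‖⁻¹ • q.im

/- `Arg(q) = ℐ(q)·arg_ℐ(q)` for nonreal `q`, and `0` on the reals. -/
open scoped Classical in
noncomputable def qArg (q : ℍ[ℝ]) : ℍ[ℝ] :=
  if q.im = 0 then 0 else sliceArg q • unitIm q

/-- The `2k`-th branch of the quaternionic argument:
`Arg_{2k}(q) = ℐ(q)·(arg_ℐ(q) + 2kπ)`. -/
noncomputable def qArg2k (k : ℤ) (q : ℍ[ℝ]) : ℍ[ℝ] :=
  (sliceArg q + 2 * (k : ℝ) * Real.pi) • unitIm q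

def qi : ℍ[ℝ] := ⟨0,1,0,0⟩

lemma norm_qi : ‖qi‖ = 1 := by
  rw [norm_eq_sqrt_real_inner, Quaternion.inner_self, Quaternion.normSq_def']
  norm_num [qi]

lemma im_path (x₀ t : ℝ) : (((x₀:ℝ):ℍ[ℝ]) + t • qi).im = t • qi := by
  ext <;> simp [qi, Quaternion.re_smul (a := (⟨0,1,0,0⟩ : ℍ[ℝ]))]

lemma unitIm_path (x₀ t : ℝ) :
    unitIm (((x₀:ℝ):ℍ[ℝ]) + t • qi) = (t/|t|) • qi := by
  rw [unitIm, im_path, norm_smul, norm_qi, smul_smul]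
  simp [Real.norm_eq_abs, div_eq_inv_mul]

theorem no_continuous_extension_of_imaginary_unit_function (x₀ : ℝ) :
    ¬ ∃ (U : Set ℍ[ℝ]) (g : ℍ[ℝ] → ℍ[ℝ]), IsOpen U ∧ ((x₀ : ℝ) : ℍ[ℝ]) ∈ U ∧
        ContinuousOn g U ∧ ∀ q ∈ U, q.im ≠ 0 → g q = unitIm q := by
  rintro ⟨U, g, hU, hx₀, hg, hext⟩
  set c : ℍ[ℝ] := ((x₀ : ℝ) : ℍ[ℝ]) with hc
  have key : ∀ s : ℝ, |s| = 1 → g c = s • qi := by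
    intro s hs
    have hs0 : s ≠ 0 := by intro h; simp [h] at hs
    set a : ℕ → ℍ[ℝ] := fun n => c + (s / (n + 1)) • qi with ha
    have hten : Filter.Tendsto a Filter.atTop (nhds c) := by
      have h0 : Filter.Tendsto (fun n : ℕ => s / (n + 1)) Filter.atTop (nhds 0) := by
        simpa [div_eq_mul_inv, mul_comm] using
          (tendsto_one_div_add_atTop_nhds_zero_nat).const_mul s
      simpa using ((h0.smul_const qi).const_add c)
    have hmem : ∀ᶠ n in Filter.atTop, a n ∈ U := hten.eventually_mem (hU.mem_nhds hx₀)
    have htenW : Filter.Tendsto a Filter.atTop (nhdsWithin c U) :=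
      tendsto_nhdsWithin_iff.2 ⟨hten, hmem⟩
    have hgten : Filter.Tendsto (fun n => g (a n)) Filter.atTop (nhds (g c)) :=
      (hg c hx₀).tendsto.comp htenW
    have hval : ∀ᶠ n in Filter.atTop, g (a n) = s • qi := by
      filter_upwards [hmem] with n hn
      have hn1 : (0:ℝ) < (n:ℝ) + 1 := by positivity
      have htn : s / ((n : ℝ) + 1) ≠ 0 := div_ne_zero hs0 (by positivity)
      have him0 : (a n).im ≠ 0 := by
        rw [ha]
        simp only [im_path]
        intro h
        have := congrArg QuaternionAlgebra.imI h
        simp [hc, htn] at this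
        simp [qi] at this
      rw [hext _ hn him0, ha]
      simp only [hc, unitIm_path]
      congr 1
      rw [abs_div, hs, abs_of_pos hn1]
      field_simp
    exact tendsto_nhds_unique hgten (tendsto_const_nhds.congr' (hval.mono fun n h => h.symm))
  have h1 := key 1 (by norm_num)
  have h2 := key (-1) (by norm_num)
  rw [h1] at h2
  have := congrArg QuaternionAlgebra.imI h2
  simp at this
  simp [qi] at this
  linarith
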